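/- Let c = (c_1,…,c_k) be a composition and let β_i = c_1+⋯+c_i for 0 ≤ i ≤ k. Then for every real q, g_c(q) = Σ_{i=0}^k q^{β_i} / ∏_{j≠i} (β_j − β_i). -/

import Mathlib

open MeasureTheory
open Finset Polynomial

/-- Iterated integral defining the composition polynomial, peeling off the
outermost variable first (so the list argument is the reversed composition). -/
noncomputable def gAux : List ℕ → ℝ → ℝ → ℝ
  | [], _, _ => 1
  | a :: rest, q, u => ∫ t in q..u, t ^ (a - 1) * gAux rest q t

/-- The composition polynomial
`g_c(q) = ∫_q^1 ∫_q^{t_k} ⋯ ∫_q^{t_2} t_1^{c_1-1} ⋯ t_k^{c_k-1} dt_1 ⋯ dt_k`. -/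
noncomputable def gcomp (c : List ℕ) (q : ℝ) : ℝ := gAux c.reverse q 1

/-- Partial sums `β_i = c_1 + ⋯ + c_i`. -/
def beta (c : List ℕ) (i : ℕ) : ℕ := (c.take i).sum

lemma take_sum_lt (d : List ℕ) (hpos : ∀ a ∈ d, 0 < a) :
    ∀ {i j : ℕ}, i < j → j ≤ d.length → (d.take i).sum < (d.take j).sum := by
  intro i j hij hj
  induction j with
  | zero => omega
  | succ j ih =>
    have hj' : j < d.length := by omega
    have hstep : (d.take j).sum < (d.take (j+1)).sum := by
      rw [List.sum_take_succ d j hj']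
      have := hpos d[j] (List.getElem_mem hj')
      omega
    rcases Nat.lt_or_ge i j with h | h
    · exact lt_trans (ih h (le_of_lt hj')) hstep
    · have : i = j := by omega
      subst this; exact hstep

lemma take_sum_le (d : List ℕ) (i : ℕ) : (d.take i).sum ≤ d.sum := by
  conv_rhs => rw [← List.take_append_drop i d]
  rw [List.sum_append]
  exact Nat.le_add_right _ _

lemma residue_sum {s : Finset ℕ} {v : ℕ → ℝ} (hvs : Set.InjOn v s) (hs : 2 ≤ s.card) :
    ∑ i ∈ s, (∏ j ∈ s.erase i, (v i - v j))⁻¹ = 0 := by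
  have hne : s.Nonempty := card_pos.mp (by omega)
  have h := Lagrange.sum_basis hvs hne
  have h2 := congrArg (fun p => Polynomial.coeff p (s.card - 1)) h
  simp only [Polynomial.finset_sum_coeff, Polynomial.coeff_one] at h2
  rw [if_neg (by omega)] at h2
  rw [← h2]
  refine (Finset.sum_congr rfl fun i hi => ?_)
  have hdeg := Lagrange.natDegree_basis hvs hi
  rw [← hdeg, Polynomial.coeff_natDegree, Lagrange.basis, Polynomial.leadingCoeff_prod,
    ← Finset.prod_inv_distrib]
  refine (Finset.prod_congr rfl fun j hj => ?_)
  rw [Lagrange.basisDivisor, Polynomial.leadingCoeff_mul, Polynomial.leadingCoeff_C,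
    (Polynomial.monic_X_sub_C (v j)).leadingCoeff, mul_one]

lemma prod_shift (f : ℕ → ℝ) (m i : ℕ) :
    ∏ j ∈ (Finset.range (m+2)).erase (i+1), f j
      = f 0 * ∏ j ∈ (Finset.range (m+1)).erase i, f (j+1) := by
  have h0 : (0:ℕ) ∈ (Finset.range (m+2)).erase (i+1) := by simp
  rw [← Finset.mul_prod_erase _ f h0]
  congr 1
  have hset : ((Finset.range (m+2)).erase (i+1)).erase 0
      = ((Finset.range (m+1)).erase i).image (· + 1) := by
    ext x
    simp only [Finset.mem_erase, Finset.mem_range, Finset.mem_image]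
    constructor
    · rintro ⟨hx0, hxi, hxm⟩
      exact ⟨x - 1, ⟨by omega, by omega⟩, by omega⟩
    · rintro ⟨y, ⟨hyi, hym⟩, rfl⟩
      omega
  rw [hset, Finset.prod_image (fun a _ b _ h => by omega)]

lemma prodD (a : ℕ) (rest : List ℕ) (i : ℕ) :
    ∏ j ∈ (Finset.range (rest.length + 1 + 1)).erase (i+1),
        (((a + (rest.take i).sum : ℕ) : ℝ) - ((((a :: rest).take j).sum : ℕ) : ℝ))
      = ((a + (rest.take i).sum : ℕ) : ℝ) *
        ∏ j ∈ (Finset.range (rest.length + 1)).erase i,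
          (((rest.take i).sum : ℝ) - ((rest.take j).sum : ℝ)) := by
  rw [show rest.length + 1 + 1 = rest.length + 2 from rfl, prod_shift]
  simp only [List.take_succ_cons, List.sum_cons, List.take_zero, List.sum_nil, Nat.cast_zero,
    sub_zero]
  refine congrArg _ (Finset.prod_congr rfl fun j hj => ?_)
  push_cast
  ring

lemma gAux_eq (d : List ℕ) (hpos : ∀ a ∈ d, 0 < a) (q : ℝ) : ∀ u : ℝ,
    gAux d q u = ∑ i ∈ Finset.range (d.length + 1),
      q ^ (d.sum - (d.take i).sum) * u ^ (d.take i).sum /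
        ∏ j ∈ (Finset.range (d.length + 1)).erase i,
          (((d.take i).sum : ℝ) - ((d.take j).sum : ℝ)) := by
  induction d with
  | nil => intro u; simp [gAux]
  | cons a rest IH =>
    intro u
    have hpos' : ∀ b ∈ rest, 0 < b := fun b hb => hpos b (List.mem_cons_of_mem a hb)
    have ha : 0 < a := hpos a List.mem_cons_self
    have IH' := IH hpos'
    show (∫ t in q..u, t ^ (a - 1) * gAux rest q t) = _
    simp only [IH']
    rw [intervalIntegral.integral_congr
      (g := fun t => ∑ i ∈ Finset.range (rest.length + 1),
        (q ^ (rest.sum - (rest.take i).sum) /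
          ∏ j ∈ (Finset.range (rest.length + 1)).erase i,
            (((rest.take i).sum : ℝ) - ((rest.take j).sum : ℝ))) * t ^ (a - 1 + (rest.take i).sum))
      (fun t _ => by
        simp only
        rw [Finset.mul_sum]
        exact Finset.sum_congr rfl fun i _ => by rw [pow_add]; ring)]
    rw [intervalIntegral.integral_finset_sum
      (f := fun i t => (q ^ (rest.sum - (rest.take i).sum) /
          ∏ j ∈ (Finset.range (rest.length + 1)).erase i,
            (((rest.take i).sum : ℝ) - ((rest.take j).sum : ℝ))) * t ^ (a - 1 + (rest.take i).sum))
      (fun i _ => ((continuous_const.mul (continuous_pow _)).intervalIntegrable _ _))]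
    simp only [intervalIntegral.integral_const_mul, integral_pow]
    have hfix : ∀ b : ℕ, a - 1 + b + 1 = a + b := fun b => by omega
    have hfix2 : ∀ b : ℕ, ((a - 1 + b : ℕ) : ℝ) + 1 = ((a + b : ℕ) : ℝ) := fun b => by
      push_cast [Nat.cast_sub (show 1 ≤ a by omega)]; ring
    simp only [hfix, hfix2, List.length_cons, List.sum_cons]
    conv_rhs => rw [Finset.sum_range_succ']
    simp only [List.take_succ_cons, List.sum_cons, List.take_zero, List.sum_nil, Nat.sub_zero,
      pow_zero, Nat.cast_zero, mul_one]
    rw [← sub_eq_iff_eq_add', ← Finset.sum_sub_distrib]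
    have hNrw : ∀ b : ℕ, a + rest.sum - (a + b) = rest.sum - b := fun b => by omega
    simp only [hNrw]
    trans ∑ i ∈ Finset.range (rest.length + 1),
        -(q ^ (a + rest.sum)) *
          (((a + (rest.take i).sum : ℕ) : ℝ) *
            ∏ j ∈ (Finset.range (rest.length + 1)).erase i,
              (((rest.take i).sum : ℝ) - ((rest.take j).sum : ℝ)))⁻¹
    · refine Finset.sum_congr rfl fun i _ => ?_
      rw [show rest.length + 1 + 1 = rest.length + 2 from rfl] 
      rw [prodD a rest i]
      have hq : q ^ (rest.sum - (rest.take i).sum) * q ^ (a + (rest.take i).sum)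
          = q ^ (a + rest.sum) := by
        rw [← pow_add]; congr 1
        have := take_sum_le rest i; omega
      rw [← hq]; ring
    · have hinj : Set.InjOn (fun j => ((((a :: rest).take j).sum : ℕ) : ℝ))
          ↑(Finset.range (rest.length + 1 + 1)) := by
        intro i hi j hj hij
        simp only at hij
        have hij' : (((a :: rest).take i).sum : ℕ) = ((a :: rest).take j).sum := by
          exact_mod_cast hij
        simp only [Finset.coe_range, Set.mem_Iio] at hi hj
        rcases lt_trichotomy i j with h | h | h
        · have hlt := take_sum_lt (a :: rest) hpos h
            (show j ≤ (a :: rest).length by simp only [List.length_cons]; omega)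
          omega
        · exact h
        · have hlt := take_sum_lt (a :: rest) hpos h
            (show i ≤ (a :: rest).length by simp only [List.length_cons]; omega)
          omega
      have hres := residue_sum hinj (by rw [Finset.card_range]; omega)
      rw [Finset.sum_range_succ'] at hres
      simp only [List.take_succ_cons, List.sum_cons, List.take_zero, List.sum_nil,
        Nat.cast_zero] at hres
      rw [Finset.sum_congr rfl (fun i _ => congrArg Inv.inv (prodD a rest i))] at hres
      rw [← Finset.mul_sum, eq_neg_of_add_eq_zero_left hres]
      ring

/-- Theorem: `g_c(q) = Σ_{i=0}^k q^{β_i} / ∏_{j ≠ i} (β_j − β_i)`. -/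
theorem composition_polynomial_closed_form (c : List ℕ) (hpos : ∀ a ∈ c, 0 < a) (q : ℝ) :
    gcomp c q = ∑ i ∈ Finset.range (c.length + 1),
      q ^ beta c i /
        ∏ j ∈ (Finset.range (c.length + 1)).erase i, ((beta c j : ℝ) - (beta c i : ℝ)) := by
  have hposr : ∀ a ∈ c.reverse, 0 < a := fun a ha => hpos a (List.mem_reverse.mp ha)
  rw [gcomp, gAux_eq c.reverse hposr q 1]
  simp only [List.length_reverse, List.sum_reverse, one_pow, mul_one]
  have hble : ∀ i, beta c i ≤ c.sum := fun i => take_sum_le c i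
  have hd : ∀ i, i ≤ c.length → (c.reverse.take i).sum = c.sum - beta c (c.length - i) := by
    intro i hi
    have h1 : (c.reverse.take i).sum + (c.reverse.drop i).sum = c.sum := by
      rw [← List.sum_append, List.take_append_drop, List.sum_reverse]
    rw [List.drop_reverse, List.sum_reverse] at h1
    unfold beta
    omega
  refine Finset.sum_nbij' (fun i => c.length - i) (fun i => c.length - i) ?_ ?_ ?_ ?_ ?_
  · intro i hi; simp only [Finset.mem_range] at hi ⊢; omega
  · intro i hi; simp only [Finset.mem_range] at hi ⊢; omega
  · intro i hi; simp only [Finset.mem_range] at hi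
    show c.length - (c.length - i) = i; omega
  · intro i hi; simp only [Finset.mem_range] at hi
    show c.length - (c.length - i) = i; omega
  · intro i hi
    simp only [Finset.mem_range] at hi
    have hi' : i ≤ c.length := by omega
    beta_reduce
    congr 1
    · rw [hd i hi']
      congr 1
      have := hble (c.length - i)
      omega
    · refine Finset.prod_nbij' (fun j => c.length - j) (fun j => c.length - j) ?_ ?_ ?_ ?_ ?_
      · intro j hj; simp only [Finset.mem_erase, Finset.mem_range] at hj ⊢; omega
      · intro j hj; simp only [Finset.mem_erase, Finset.mem_range] at hj ⊢; omega
      · intro j hj; simp only [Finset.mem_erase, Finset.mem_range] at hj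
        show c.length - (c.length - j) = j; omega
      · intro j hj; simp only [Finset.mem_erase, Finset.mem_range] at hj
        show c.length - (c.length - j) = j; omega
      · intro j hj
        simp only [Finset.mem_erase, Finset.mem_range] at hj
        rw [hd i hi', hd j (by omega)]
        rw [Nat.cast_sub (hble _), Nat.cast_sub (hble _)]
        ring
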